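/- Let p be a prime. Then ψ(Z_p⁴) = p⁵ − p + 1 < ψ(Z_p × Z_p × Z_{p²}) = p⁶ − p⁵ + p⁴ − p + 1 < ψ(Z_{p²} × Z_{p²}) = p⁶ − p⁴ + p³ − p + 1 < ψ(Z_p × Z_{p³}) = p⁷ − p⁶ + p⁵ − p⁴ + p³ − p + 1 < ψ(Z_{p⁴}) = p⁸ − p⁷ + p⁶ − p⁵ + p⁴ − p³ + p² − p + 1. -/

import Mathlib

open Finset

/-- `psi G` is the sum of the orders of all elements of the finite group `G`. -/
noncomputable def psi (G : Type*) [Monoid G] [Fintype G] : ℕ := ∑ a : G, orderOf a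

lemma cyc_count {α : Type*} [Group α] [Fintype α] [DecidableEq α] [IsCyclic α] {d : ℕ}
    (hd : d ∣ Fintype.card α) (hd0 : d ≠ 0) :
    (univ.filter fun a : α => a ^ d = 1).card = d := by
  rw [← sum_card_orderOf_eq_card_pow_eq_one hd0,
    Finset.sum_congr rfl
      (fun m hm => IsCyclic.card_orderOf_eq_totient ((Nat.mem_divisors.mp hm).1.trans hd))]
  exact Nat.sum_totient d

lemma zmod_count_pow (p n : ℕ) (hp : p.Prime) (m k : ℕ) (hn : n = p ^ m) [NeZero n] :
    (univ.filter fun a : Multiplicative (ZMod n) => a ^ p ^ k = 1).card = p ^ min k m := by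
  subst hn
  have hcard : Fintype.card (Multiplicative (ZMod (p ^ m))) = p ^ m := by
    simp [ZMod.card]
  rcases le_total k m with h | h
  · rw [min_eq_left h]
    exact cyc_count (by rw [hcard]; exact pow_dvd_pow p h) (pow_ne_zero _ hp.ne_zero)
  · rw [min_eq_right h]
    have hall : ∀ a : Multiplicative (ZMod (p ^ m)), a ^ p ^ k = 1 := by
      intro a
      have : a ^ p ^ m = 1 := by have h0 := pow_card_eq_one (x := a); rwa [hcard] at h0
      calc a ^ p ^ k = (a ^ p ^ m) ^ p ^ (k - m) := by
            rw [← pow_mul, ← pow_add, Nat.add_sub_cancel' h]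
        _ = 1 := by rw [this, one_pow]
    rw [Finset.filter_true_of_mem (fun a _ => hall a), Finset.card_univ, hcard]

lemma prod_count {G H : Type*} [Group G] [Group H] [Fintype G] [Fintype H]
    [DecidableEq G] [DecidableEq H] (d : ℕ) :
    (univ.filter fun x : G × H => x ^ d = 1).card
      = (univ.filter fun x : G => x ^ d = 1).card * (univ.filter fun x : H => x ^ d = 1).card := by
  rw [← Finset.card_product, ← Finset.filter_product]
  congr 1
  · rw [← Finset.univ_product_univ]
    apply Finset.filter_congr
    intro x _
    simp [Prod.pow_def, Prod.ext_iff, Prod.fst_one, Prod.snd_one]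

lemma tele (p : ℕ) (hp : 0 < p) (j : ℕ) :
    ∑ k ∈ range j, (p ^ (k + 1) - p ^ k) = p ^ j - 1 := by
  induction j with
  | zero => simp
  | succ n ih =>
    rw [sum_range_succ, ih]
    have h1 : 1 ≤ p ^ n := Nat.one_le_pow _ _ hp
    have h2 : p ^ n ≤ p ^ (n + 1) := Nat.pow_le_pow_right hp n.le_succ
    omega

lemma orderOf_formula {G : Type*} [Group G] [Fintype G] [DecidableEq G] (p m : ℕ) (hp : p.Prime)
    (x : G) (hx : x ^ p ^ m = 1) :
    orderOf x = 1 + ∑ k ∈ range m, (p ^ (k + 1) - p ^ k) * (if x ^ p ^ k = 1 then 0 else 1) := by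
  obtain ⟨j, hj, hxj⟩ := (Nat.dvd_prime_pow hp).mp (orderOf_dvd_of_pow_eq_one hx)
  have hcond : ∀ k, (x ^ p ^ k = 1) ↔ j ≤ k := by
    intro k
    rw [← orderOf_dvd_iff_pow_eq_one, hxj, Nat.pow_dvd_pow_iff_le_right hp.one_lt]
  simp only [hcond, hxj]
  have hsub : ∑ k ∈ range m, (p ^ (k + 1) - p ^ k) * (if j ≤ k then 0 else 1)
      = ∑ k ∈ range j, (p ^ (k + 1) - p ^ k) := by
    rw [← Finset.sum_subset (Finset.range_subset_range.mpr hj)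
      (fun k _ hk => by have : j ≤ k := by simpa using Finset.mem_range.not.mp hk
                        simp [this])]
    apply Finset.sum_congr rfl
    intro k hk
    have : ¬ j ≤ k := by simpa using Finset.mem_range.mp hk
    simp [this]
  rw [hsub, tele p hp.pos j]
  have : 1 ≤ p ^ j := Nat.one_le_pow _ _ hp.pos
  omega

lemma psi_formula {G : Type*} [Group G] [Fintype G] [DecidableEq G] (p m : ℕ) (hp : p.Prime)
    (hexp : ∀ x : G, x ^ p ^ m = 1) :
    psi G = Fintype.card G + ∑ k ∈ range m,
      (p ^ (k + 1) - p ^ k) * (Fintype.card G - (univ.filter fun x : G => x ^ p ^ k = 1).card) := by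
  unfold psi
  rw [Finset.sum_congr rfl (fun x _ => orderOf_formula p m hp x (hexp x))]
  rw [Finset.sum_add_distrib, Finset.sum_const, Finset.card_univ, smul_eq_mul, mul_one]
  congr 1
  rw [Finset.sum_comm]
  apply Finset.sum_congr rfl
  intro k _
  rw [← Finset.mul_sum]
  congr 1
  have hcnt : ∑ x : G, (if x ^ p ^ k = 1 then 0 else 1)
      = (univ.filter fun x : G => ¬ (x ^ p ^ k = 1)).card := by
    rw [Finset.card_filter]
    apply Finset.sum_congr rfl
    intro x _
    by_cases h : x ^ p ^ k = 1 <;> simp [h]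
  rw [hcnt]
  have := Finset.card_filter_add_card_filter_not (s := (univ : Finset G))
      (p := fun x : G => x ^ p ^ k = 1)
  rw [Finset.card_univ] at this
  omega

lemma zmod_exp (n d : ℕ) [NeZero n] (h : n ∣ d) (x : Multiplicative (ZMod n)) : x ^ d = 1 := by
  apply orderOf_dvd_iff_pow_eq_one.mp
  refine dvd_trans (dvd_trans orderOf_dvd_card ?_) h
  simp [ZMod.card]

section groups
variable (p : ℕ) [Fact p.Prime]

lemma psi1 :
    psi (Multiplicative (ZMod p) × Multiplicative (ZMod p) × Multiplicative (ZMod p) ×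
        Multiplicative (ZMod p)) = p ^ 5 - p + 1 := by
  have hp : p.Prime := Fact.out
  have hexp : ∀ x : Multiplicative (ZMod p) × Multiplicative (ZMod p) × Multiplicative (ZMod p) ×
      Multiplicative (ZMod p), x ^ p ^ 1 = 1 := by
    intro x
    simp only [Prod.ext_iff, Prod.pow_fst, Prod.pow_snd, Prod.fst_one, Prod.snd_one]
    exact ⟨zmod_exp _ _ (by simp) _, zmod_exp _ _ (by simp) _, zmod_exp _ _ (by simp) _,
      zmod_exp _ _ (by simp) _⟩
  rw [psi_formula p 1 hp hexp]
  have hcard : Fintype.card (Multiplicative (ZMod p) × Multiplicative (ZMod p) ×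
      Multiplicative (ZMod p) × Multiplicative (ZMod p)) = p ^ 4 := by
    simp [ZMod.card]; ring
  have hN : ∀ k, (univ.filter fun x : Multiplicative (ZMod p) × Multiplicative (ZMod p) ×
      Multiplicative (ZMod p) × Multiplicative (ZMod p) => x ^ p ^ k = 1).card
      = p ^ min k 1 * (p ^ min k 1 * (p ^ min k 1 * p ^ min k 1)) := by
    intro k
    rw [prod_count, prod_count, prod_count,
      zmod_count_pow p p hp 1 k (pow_one p).symm]
  rw [hcard, Finset.sum_range_one, hN 0]
  norm_num
  have h1 : 1 ≤ p := hp.one_le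
  have h4 : 1 ≤ p ^ 4 := Nat.one_le_pow _ _ hp.pos
  have h5 : p ≤ p ^ 5 := by calc p = p ^ 1 := (pow_one p).symm
                                 _ ≤ p ^ 5 := Nat.pow_le_pow_right hp.pos (by norm_num)
  zify [h1, h4, h5]
  ring

lemma psi2 :
    psi (Multiplicative (ZMod p) × Multiplicative (ZMod p) × Multiplicative (ZMod (p ^ 2))) =
      p ^ 6 - p ^ 5 + p ^ 4 - p + 1 := by
  have hp : p.Prime := Fact.out
  have hexp : ∀ x : Multiplicative (ZMod p) × Multiplicative (ZMod p) ×
      Multiplicative (ZMod (p ^ 2)), x ^ p ^ 2 = 1 := by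
    intro x
    simp only [Prod.ext_iff, Prod.pow_fst, Prod.pow_snd, Prod.fst_one, Prod.snd_one]
    exact ⟨zmod_exp _ _ (dvd_pow_self p two_ne_zero) _,
      zmod_exp _ _ (dvd_pow_self p two_ne_zero) _, zmod_exp _ _ dvd_rfl _⟩
  rw [psi_formula p 2 hp hexp]
  have hcard : Fintype.card (Multiplicative (ZMod p) × Multiplicative (ZMod p) ×
      Multiplicative (ZMod (p ^ 2))) = p ^ 4 := by
    simp [ZMod.card]; ring
  have hN : ∀ k, (univ.filter fun x : Multiplicative (ZMod p) × Multiplicative (ZMod p) ×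
      Multiplicative (ZMod (p ^ 2)) => x ^ p ^ k = 1).card
      = p ^ min k 1 * (p ^ min k 1 * p ^ min k 2) := by
    intro k
    rw [prod_count, prod_count, zmod_count_pow p p hp 1 k (pow_one p).symm,
      zmod_count_pow p (p ^ 2) hp 2 k rfl]
  rw [hcard, Finset.sum_range_succ, Finset.sum_range_one, hN 0, hN 1]
  norm_num
  have h1 : 1 ≤ p := hp.one_le
  have h01 : 1 ≤ p ^ 1 := Nat.one_le_pow _ _ hp.pos
  have h12 : p ^ 1 ≤ p ^ 2 := Nat.pow_le_pow_right hp.pos (by norm_num)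
  have h4 : 1 ≤ p ^ 4 := Nat.one_le_pow _ _ hp.pos
  have h34 : p * (p * p) ≤ p ^ 4 := by nlinarith [hp.two_le]
  have h56 : p ^ 5 ≤ p ^ 6 := Nat.pow_le_pow_right hp.pos (by norm_num)
  have hp4 : p ≤ p ^ 4 := by calc p = p ^ 1 := (pow_one p).symm
                                  _ ≤ p ^ 4 := Nat.pow_le_pow_right hp.pos (by norm_num)
  have hnest : p ≤ p ^ 6 - p ^ 5 + p ^ 4 := by omega
  have hp2 : p ≤ p ^ 2 := by calc p = p ^ 1 := (pow_one p).symm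
                                  _ ≤ p ^ 2 := Nat.pow_le_pow_right hp.pos (by norm_num)
  zify [h1, h01, h12, h4, h34, h56, hnest, hp2, hp4]
  ring

lemma psi3 :
    psi (Multiplicative (ZMod (p ^ 2)) × Multiplicative (ZMod (p ^ 2))) =
      p ^ 6 - p ^ 4 + p ^ 3 - p + 1 := by
  have hp : p.Prime := Fact.out
  have hexp : ∀ x : Multiplicative (ZMod (p ^ 2)) × Multiplicative (ZMod (p ^ 2)),
      x ^ p ^ 2 = 1 := by
    intro x
    simp only [Prod.ext_iff, Prod.pow_fst, Prod.pow_snd, Prod.fst_one, Prod.snd_one]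
    exact ⟨zmod_exp _ _ dvd_rfl _, zmod_exp _ _ dvd_rfl _⟩
  rw [psi_formula p 2 hp hexp]
  have hcard : Fintype.card (Multiplicative (ZMod (p ^ 2)) × Multiplicative (ZMod (p ^ 2)))
      = p ^ 4 := by
    simp [ZMod.card]; ring
  have hN : ∀ k, (univ.filter fun x : Multiplicative (ZMod (p ^ 2)) ×
      Multiplicative (ZMod (p ^ 2)) => x ^ p ^ k = 1).card
      = p ^ min k 2 * p ^ min k 2 := by
    intro k
    rw [prod_count, zmod_count_pow p (p ^ 2) hp 2 k rfl]
  rw [hcard, Finset.sum_range_succ, Finset.sum_range_one, hN 0, hN 1]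
  norm_num
  have h1 : 1 ≤ p := hp.one_le
  have h01 : 1 ≤ p ^ 1 := Nat.one_le_pow _ _ hp.pos
  have h12 : p ^ 1 ≤ p ^ 2 := Nat.pow_le_pow_right hp.pos (by norm_num)
  have h4 : 1 ≤ p ^ 4 := Nat.one_le_pow _ _ hp.pos
  have h24 : p * p ≤ p ^ 4 := by nlinarith [hp.two_le]
  have h46 : p ^ 4 ≤ p ^ 6 := Nat.pow_le_pow_right hp.pos (by norm_num)
  have hp3 : p ≤ p ^ 3 := by calc p = p ^ 1 := (pow_one p).symm
                                  _ ≤ p ^ 3 := Nat.pow_le_pow_right hp.pos (by norm_num)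
  have hnest : p ≤ p ^ 6 - p ^ 4 + p ^ 3 := by omega
  have hp2 : p ≤ p ^ 2 := by calc p = p ^ 1 := (pow_one p).symm
                                  _ ≤ p ^ 2 := Nat.pow_le_pow_right hp.pos (by norm_num)
  zify [h1, h01, h12, h4, h24, h46, hnest, hp2]
  ring

lemma psi4 :
    psi (Multiplicative (ZMod p) × Multiplicative (ZMod (p ^ 3))) =
      p ^ 7 - p ^ 6 + p ^ 5 - p ^ 4 + p ^ 3 - p + 1 := by
  have hp : p.Prime := Fact.out
  have hexp : ∀ x : Multiplicative (ZMod p) × Multiplicative (ZMod (p ^ 3)),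
      x ^ p ^ 3 = 1 := by
    intro x
    simp only [Prod.ext_iff, Prod.pow_fst, Prod.pow_snd, Prod.fst_one, Prod.snd_one]
    exact ⟨zmod_exp _ _ (dvd_pow_self p three_ne_zero) _, zmod_exp _ _ dvd_rfl _⟩
  rw [psi_formula p 3 hp hexp]
  have hcard : Fintype.card (Multiplicative (ZMod p) × Multiplicative (ZMod (p ^ 3)))
      = p ^ 4 := by
    simp [ZMod.card]; ring
  have hN : ∀ k, (univ.filter fun x : Multiplicative (ZMod p) ×
      Multiplicative (ZMod (p ^ 3)) => x ^ p ^ k = 1).card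
      = p ^ min k 1 * p ^ min k 3 := by
    intro k
    rw [prod_count, zmod_count_pow p p hp 1 k (pow_one p).symm,
      zmod_count_pow p (p ^ 3) hp 3 k rfl]
  rw [hcard, Finset.sum_range_succ, Finset.sum_range_succ, Finset.sum_range_one,
    hN 0, hN 1, hN 2]
  norm_num
  have h1 : 1 ≤ p := hp.one_le
  have h01 : 1 ≤ p ^ 1 := Nat.one_le_pow _ _ hp.pos
  have h12 : p ^ 1 ≤ p ^ 2 := Nat.pow_le_pow_right hp.pos (by norm_num)
  have h23 : p ^ 2 ≤ p ^ 3 := Nat.pow_le_pow_right hp.pos (by norm_num)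
  have h4 : 1 ≤ p ^ 4 := Nat.one_le_pow _ _ hp.pos
  have h24 : p * p ≤ p ^ 4 := by nlinarith [hp.two_le]
  have h34 : p * p ^ 2 ≤ p ^ 4 := by nlinarith [hp.two_le]
  have h67 : p ^ 6 ≤ p ^ 7 := Nat.pow_le_pow_right hp.pos (by norm_num)
  have h45 : p ^ 4 ≤ p ^ 5 := Nat.pow_le_pow_right hp.pos (by norm_num)
  have h56 : p ^ 5 ≤ p ^ 6 := Nat.pow_le_pow_right hp.pos (by norm_num)
  have hp3 : p ≤ p ^ 3 := by calc p = p ^ 1 := (pow_one p).symm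
                                  _ ≤ p ^ 3 := Nat.pow_le_pow_right hp.pos (by norm_num)
  have hnest1 : p ^ 4 ≤ p ^ 7 - p ^ 6 + p ^ 5 := by omega
  have hnest2 : p ≤ p ^ 7 - p ^ 6 + p ^ 5 - p ^ 4 + p ^ 3 := by omega
  have hp2 : p ≤ p ^ 2 := by calc p = p ^ 1 := (pow_one p).symm
                                  _ ≤ p ^ 2 := Nat.pow_le_pow_right hp.pos (by norm_num)
  zify [h1, h01, h12, h23, h4, h24, h34, h67, hnest1, hnest2, hp2]
  ring

lemma psi5 :
    psi (Multiplicative (ZMod (p ^ 4))) =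
      p ^ 8 - p ^ 7 + p ^ 6 - p ^ 5 + p ^ 4 - p ^ 3 + p ^ 2 - p + 1 := by
  have hp : p.Prime := Fact.out
  have hexp : ∀ x : Multiplicative (ZMod (p ^ 4)), x ^ p ^ 4 = 1 :=
    fun x => zmod_exp _ _ dvd_rfl x
  rw [psi_formula p 4 hp hexp]
  have hcard : Fintype.card (Multiplicative (ZMod (p ^ 4))) = p ^ 4 := by
    simp [ZMod.card]
  have hN : ∀ k, (univ.filter fun x : Multiplicative (ZMod (p ^ 4)) =>
      x ^ p ^ k = 1).card = p ^ min k 4 := by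
    intro k
    rw [zmod_count_pow p (p ^ 4) hp 4 k rfl]
  rw [hcard, Finset.sum_range_succ, Finset.sum_range_succ, Finset.sum_range_succ,
    Finset.sum_range_one, hN 0, hN 1, hN 2, hN 3]
  norm_num
  have h1 : 1 ≤ p := hp.one_le
  have h01 : 1 ≤ p ^ 1 := Nat.one_le_pow _ _ hp.pos
  have h12 : p ^ 1 ≤ p ^ 2 := Nat.pow_le_pow_right hp.pos (by norm_num)
  have h23 : p ^ 2 ≤ p ^ 3 := Nat.pow_le_pow_right hp.pos (by norm_num)
  have h34 : p ^ 3 ≤ p ^ 4 := Nat.pow_le_pow_right hp.pos (by norm_num)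
  have h4 : 1 ≤ p ^ 4 := Nat.one_le_pow _ _ hp.pos
  have hp4 : p ≤ p ^ 4 := by calc p = p ^ 1 := (pow_one p).symm
                                  _ ≤ p ^ 4 := Nat.pow_le_pow_right hp.pos (by norm_num)
  have hp2 : p ≤ p ^ 2 := by calc p = p ^ 1 := (pow_one p).symm
                                  _ ≤ p ^ 2 := Nat.pow_le_pow_right hp.pos (by norm_num)
  have h78 : p ^ 7 ≤ p ^ 8 := Nat.pow_le_pow_right hp.pos (by norm_num)
  have h56 : p ^ 5 ≤ p ^ 6 := Nat.pow_le_pow_right hp.pos (by norm_num)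
  have h67 : p ^ 6 ≤ p ^ 7 := Nat.pow_le_pow_right hp.pos (by norm_num)
  have h45 : p ^ 4 ≤ p ^ 5 := Nat.pow_le_pow_right hp.pos (by norm_num)
  have hnest1 : p ^ 5 ≤ p ^ 8 - p ^ 7 + p ^ 6 := by omega
  have hnest2 : p ^ 3 ≤ p ^ 8 - p ^ 7 + p ^ 6 - p ^ 5 + p ^ 4 := by omega
  have hnest3 : p ≤ p ^ 8 - p ^ 7 + p ^ 6 - p ^ 5 + p ^ 4 - p ^ 3 + p ^ 2 := by omega
  have h24 : p ^ 2 ≤ p ^ 4 := Nat.pow_le_pow_right hp.pos (by norm_num)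
  zify [h1, h01, h12, h23, h34, h4, hp4, hp2, h24, h78, hnest1, hnest2, hnest3]
  ring

end groups


section numeric
variable (p : ℕ)

lemma ineq1 (hp : p.Prime) : p ^ 5 - p + 1 < p ^ 6 - p ^ 5 + p ^ 4 - p + 1 := by
  have hmono : ∀ i j : ℕ, i ≤ j → p ^ i ≤ p ^ j := fun i j h => Nat.pow_le_pow_right hp.pos h
  have hp4 : p ≤ p ^ 4 := by calc p = p ^ 1 := (pow_one p).symm
                                  _ ≤ p ^ 4 := hmono 1 4 (by norm_num)
  have hp5 : p ≤ p ^ 5 := by calc p = p ^ 1 := (pow_one p).symm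
                                  _ ≤ p ^ 5 := hmono 1 5 (by norm_num)
  have h56 : p ^ 5 ≤ p ^ 6 := hmono 5 6 (by norm_num)
  have hnest : p ≤ p ^ 6 - p ^ 5 + p ^ 4 := by omega
  have hq : (2:ℤ) ≤ (p:ℤ) := by exact_mod_cast hp.two_le
  have key : (0:ℤ) < (p:ℤ) ^ 4 * ((p:ℤ) - 1) ^ 2 := by nlinarith
  zify [hp5, h56, hnest, hp.one_le]
  nlinarith [key]

lemma ineq2 (hp : p.Prime) :
    p ^ 6 - p ^ 5 + p ^ 4 - p + 1 < p ^ 6 - p ^ 4 + p ^ 3 - p + 1 := by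
  have hmono : ∀ i j : ℕ, i ≤ j → p ^ i ≤ p ^ j := fun i j h => Nat.pow_le_pow_right hp.pos h
  have hp3 : p ≤ p ^ 3 := by calc p = p ^ 1 := (pow_one p).symm
                                  _ ≤ p ^ 3 := hmono 1 3 (by norm_num)
  have hp4 : p ≤ p ^ 4 := by calc p = p ^ 1 := (pow_one p).symm
                                  _ ≤ p ^ 4 := hmono 1 4 (by norm_num)
  have h56 : p ^ 5 ≤ p ^ 6 := hmono 5 6 (by norm_num)
  have h46 : p ^ 4 ≤ p ^ 6 := hmono 4 6 (by norm_num)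
  have hnest1 : p ≤ p ^ 6 - p ^ 5 + p ^ 4 := by omega
  have hnest2 : p ≤ p ^ 6 - p ^ 4 + p ^ 3 := by omega
  have hq : (2:ℤ) ≤ (p:ℤ) := by exact_mod_cast hp.two_le
  have key : (0:ℤ) < (p:ℤ) ^ 3 * ((p:ℤ) - 1) ^ 2 := by nlinarith
  zify [h56, h46, hnest1, hnest2]
  nlinarith [key]

lemma ineq3 (hp : p.Prime) :
    p ^ 6 - p ^ 4 + p ^ 3 - p + 1 < p ^ 7 - p ^ 6 + p ^ 5 - p ^ 4 + p ^ 3 - p + 1 := by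
  have hmono : ∀ i j : ℕ, i ≤ j → p ^ i ≤ p ^ j := fun i j h => Nat.pow_le_pow_right hp.pos h
  have hp3 : p ≤ p ^ 3 := by calc p = p ^ 1 := (pow_one p).symm
                                  _ ≤ p ^ 3 := hmono 1 3 (by norm_num)
  have h45 : p ^ 4 ≤ p ^ 5 := hmono 4 5 (by norm_num)
  have h46 : p ^ 4 ≤ p ^ 6 := hmono 4 6 (by norm_num)
  have h67 : p ^ 6 ≤ p ^ 7 := hmono 6 7 (by norm_num)
  have hnest1 : p ≤ p ^ 6 - p ^ 4 + p ^ 3 := by omega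
  have hnest2 : p ^ 4 ≤ p ^ 7 - p ^ 6 + p ^ 5 := by omega
  have hnest3 : p ≤ p ^ 7 - p ^ 6 + p ^ 5 - p ^ 4 + p ^ 3 := by omega
  have hq : (2:ℤ) ≤ (p:ℤ) := by exact_mod_cast hp.two_le
  have key : (0:ℤ) < (p:ℤ) ^ 5 * ((p:ℤ) - 1) ^ 2 := by nlinarith
  zify [h46, h67, hnest1, hnest2, hnest3]
  nlinarith [key]

lemma ineq4 (hp : p.Prime) :
    p ^ 7 - p ^ 6 + p ^ 5 - p ^ 4 + p ^ 3 - p + 1 <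
      p ^ 8 - p ^ 7 + p ^ 6 - p ^ 5 + p ^ 4 - p ^ 3 + p ^ 2 - p + 1 := by
  have hmono : ∀ i j : ℕ, i ≤ j → p ^ i ≤ p ^ j := fun i j h => Nat.pow_le_pow_right hp.pos h
  have hp2 : p ≤ p ^ 2 := by calc p = p ^ 1 := (pow_one p).symm
                                  _ ≤ p ^ 2 := hmono 1 2 (by norm_num)
  have hp3 : p ≤ p ^ 3 := by calc p = p ^ 1 := (pow_one p).symm
                                  _ ≤ p ^ 3 := hmono 1 3 (by norm_num)
  have h45 : p ^ 4 ≤ p ^ 5 := hmono 4 5 (by norm_num)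
  have h34 : p ^ 3 ≤ p ^ 4 := hmono 3 4 (by norm_num)
  have h67 : p ^ 6 ≤ p ^ 7 := hmono 6 7 (by norm_num)
  have h78 : p ^ 7 ≤ p ^ 8 := hmono 7 8 (by norm_num)
  have h56 : p ^ 5 ≤ p ^ 6 := hmono 5 6 (by norm_num)
  have hnest2 : p ^ 4 ≤ p ^ 7 - p ^ 6 + p ^ 5 := by omega
  have hnest3 : p ≤ p ^ 7 - p ^ 6 + p ^ 5 - p ^ 4 + p ^ 3 := by omega
  have hnest4 : p ^ 5 ≤ p ^ 8 - p ^ 7 + p ^ 6 := by omega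
  have hnest5 : p ^ 3 ≤ p ^ 8 - p ^ 7 + p ^ 6 - p ^ 5 + p ^ 4 := by omega
  have hnest6 : p ≤ p ^ 8 - p ^ 7 + p ^ 6 - p ^ 5 + p ^ 4 - p ^ 3 + p ^ 2 := by omega
  have hq : (2:ℤ) ≤ (p:ℤ) := by exact_mod_cast hp.two_le
  have key2 : (0:ℤ) < (p:ℤ) ^ 2 * ((p:ℤ) - 1) ^ 2 := by nlinarith
  have key4 : (0:ℤ) < (p:ℤ) ^ 4 * ((p:ℤ) - 1) ^ 2 := by nlinarith
  have key6 : (0:ℤ) < (p:ℤ) ^ 6 * ((p:ℤ) - 1) ^ 2 := by nlinarith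
  zify [h67, h78, hnest2, hnest3, hnest4, hnest5, hnest6]
  nlinarith [key2, key4, key6]

end numeric

theorem psi_order_p_fourth (p : ℕ) [Fact p.Prime] :
    psi (Multiplicative (ZMod p) × Multiplicative (ZMod p) × Multiplicative (ZMod p) ×
        Multiplicative (ZMod p)) = p ^ 5 - p + 1 ∧
    psi (Multiplicative (ZMod p) × Multiplicative (ZMod p) × Multiplicative (ZMod (p ^ 2))) =
      p ^ 6 - p ^ 5 + p ^ 4 - p + 1 ∧
    psi (Multiplicative (ZMod (p ^ 2)) × Multiplicative (ZMod (p ^ 2))) =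
      p ^ 6 - p ^ 4 + p ^ 3 - p + 1 ∧
    psi (Multiplicative (ZMod p) × Multiplicative (ZMod (p ^ 3))) =
      p ^ 7 - p ^ 6 + p ^ 5 - p ^ 4 + p ^ 3 - p + 1 ∧
    psi (Multiplicative (ZMod (p ^ 4))) =
      p ^ 8 - p ^ 7 + p ^ 6 - p ^ 5 + p ^ 4 - p ^ 3 + p ^ 2 - p + 1 ∧
    psi (Multiplicative (ZMod p) × Multiplicative (ZMod p) × Multiplicative (ZMod p) ×
        Multiplicative (ZMod p)) <
      psi (Multiplicative (ZMod p) × Multiplicative (ZMod p) × Multiplicative (ZMod (p ^ 2))) ∧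
    psi (Multiplicative (ZMod p) × Multiplicative (ZMod p) × Multiplicative (ZMod (p ^ 2))) <
      psi (Multiplicative (ZMod (p ^ 2)) × Multiplicative (ZMod (p ^ 2))) ∧
    psi (Multiplicative (ZMod (p ^ 2)) × Multiplicative (ZMod (p ^ 2))) <
      psi (Multiplicative (ZMod p) × Multiplicative (ZMod (p ^ 3))) ∧
    psi (Multiplicative (ZMod p) × Multiplicative (ZMod (p ^ 3))) <
      psi (Multiplicative (ZMod (p ^ 4))) := by
  have hp : p.Prime := Fact.out
  have e1 := psi1 p
  have e2 := psi2 p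
  have e3 := psi3 p
  have e4 := psi4 p
  have e5 := psi5 p
  refine ⟨e1, e2, e3, e4, e5, ?_, ?_, ?_, ?_⟩
  · rw [e1, e2]; exact ineq1 p hp
  · rw [e2, e3]; exact ineq2 p hp
  · rw [e3, e4]; exact ineq3 p hp
  · rw [e4, e5]; exact ineq4 p hp
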